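/- Let f ∈ dom(E) on the Sierpiński gasket, let T : C(S) → C(S) be a bounded linear operator fixing boundary values (T(f)(q_i) = f(q_i), i=1,2,3), let n ∈ ℕ be fixed and let α = {α_ω : ω ∈ Σ^(n)} be scaling factors with ‖α‖_∞ ≤ 1/√(3·5ⁿ). Suppose f^α is a continuous function satisfying the self-referential equation f^α(x) = f(x) + α_ω·(f^α − T(f))∘L_ω^{-1}(x) for all x ∈ L_ω(S), ω ∈ Σ^(n), and suppose T(f) ∈ dom(E). Then E(f^α)·(1 − 3·5ⁿ‖α‖²) ≤ E(f)·(3 + 3·5ⁿ‖α‖²‖T‖); in particular f^α ∈ dom(E), i.e., E(f^α) < ∞. -/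

import Mathlib

noncomputable section

open Metric Set Filter Topology

/-- The plane with the Euclidean norm. -/
abbrev E2 := EuclideanSpace ℝ (Fin 2)

/-- The contraction `L_i(x) = (x - q_i)/2 + q_i` towards the vertex `q i`. -/
def Lmap (q : Fin 3 → E2) (i : Fin 3) (x : E2) : E2 := midpoint ℝ x (q i)

/-- Composite map `L_ω = L_{w₁} ∘ ⋯ ∘ L_{wₙ}` for a word `ω`. -/
def Lw (q : Fin 3 → E2) : List (Fin 3) → E2 → E2
  | [] => id
  | i :: w => Lmap q i ∘ Lw q w

/-- The three vertices of the cell indexed by the word `w`. -/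
def cellVerts (q : Fin 3 → E2) (w : List (Fin 3)) : Set E2 :=
  Lw q w '' {q 0, q 1, q 2}

/-- `x ∼ₘ y` : `x` and `y` are vertices of a common level-`m` cell. -/
def SameCell (q : Fin 3 → E2) (m : ℕ) (x y : E2) : Prop :=
  ∃ w : List (Fin 3), w.length = m ∧ x ∈ cellVerts q w ∧ y ∈ cellVerts q w

/-- The Sierpiński gasket: closure of the set of all vertices of all cells. -/
def gasket (q : Fin 3 → E2) : Set E2 :=
  closure (⋃ w : List (Fin 3), cellVerts q w)

/-- `q₁, q₂, q₃` are equidistant points. -/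
def Equidistant (q : Fin 3 → E2) : Prop :=
  ∀ i j, i ≠ j → dist (q i) (q j) = 1

/-- A function is harmonic iff its vertex values satisfy the "1/5-2/5" rule on
every cell: `h(q_{ωij}) = (2/5) h(q_{ωi}) + (2/5) h(q_{ωj}) + (1/5) h(q_{ωk})`. -/
def Harmonic (q : Fin 3 → E2) (h : E2 → ℝ) : Prop :=
  ∀ w : List (Fin 3), ∀ i j k : Fin 3, i ≠ j → j ≠ k → i ≠ k →
    h (Lw q w (midpoint ℝ (q i) (q j))) =
      2/5 * h (Lw q w (q i)) + 2/5 * h (Lw q w (q j)) + 1/5 * h (Lw q w (q k))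

/-- The `m`-th level renormalized energy
`E^{(m)}(u) = (5/3)^m ∑_{x ∼ₘ y} |u(x) - u(y)|²`, the inner sum ranging over the
three edges of each of the `3^m` level-`m` cells. -/
noncomputable def energyM (q : Fin 3 → E2) (u : E2 → ℝ) (m : ℕ) : ℝ :=
  (5/3 : ℝ) ^ m * ∑ w : Fin m → Fin 3,
    ∑ p ∈ ({((0 : Fin 3), (1 : Fin 3)), (0, 2), (1, 2)} : Finset (Fin 3 × Fin 3)),
      (u (Lw q (List.ofFn w) (q p.1)) - u (Lw q (List.ofFn w) (q p.2))) ^ 2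

/-- Let `f ∈ dom(E)`, let `Tf` be the image of `f` under a bounded
linear operator fixing boundary values (so that `E(Tf) ≤ ‖T‖ E(f)`), fix `n ∈ ℕ` and
scaling factors `α = (α_ω)_{ω ∈ Σ⁽ⁿ⁾}` with `‖α‖_∞ ≤ 1/√(3·5ⁿ)`, and let `f^α` be a
continuous function satisfying the self-referential equation
`f^α(x) = f(x) + α_ω (f^α - Tf)(L_ω⁻¹ x)` for all `x ∈ L_ω(S)`, `ω ∈ Σ⁽ⁿ⁾`. If
`Tf ∈ dom(E)`, then `E(f^α) (1 - 3·5ⁿ ‖α‖²) ≤ E(f) (3 + 3·5ⁿ ‖α‖² ‖T‖)`; in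
particular `f^α ∈ dom(E)`, i.e. the energies `E^{(m)}(f^α)` converge. -/
-- helper: single-cell sum
noncomputable def cellSum (q : Fin 3 → E2) (u : E2 → ℝ) (l : List (Fin 3)) : ℝ :=
  ∑ p ∈ ({((0 : Fin 3), (1 : Fin 3)), (0, 2), (1, 2)} : Finset (Fin 3 × Fin 3)),
      (u (Lw q l (q p.1)) - u (Lw q l (q p.2))) ^ 2

lemma energyM_eq (q : Fin 3 → E2) (u : E2 → ℝ) (m : ℕ) :
    energyM q u m = (5/3 : ℝ) ^ m * ∑ w : Fin m → Fin 3, cellSum q u (List.ofFn w) := rfl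

lemma energyM_nonneg (q : Fin 3 → E2) (u : E2 → ℝ) (m : ℕ) : 0 ≤ energyM q u m := by
  unfold energyM
  positivity

lemma cellSum_cons (q : Fin 3 → E2) (u : E2 → ℝ) (i : Fin 3) (l : List (Fin 3)) :
    cellSum q u (i :: l) = cellSum q (u ∘ Lmap q i) l := rfl

lemma ofFn_cons {k : ℕ} (i : Fin 3) (w : Fin k → Fin 3) :
    List.ofFn (Fin.cons i w) = i :: List.ofFn w := by
  rw [List.ofFn_succ]
  simp

lemma vert_mem_gasket (q : Fin 3 → E2) (l : List (Fin 3)) (i : Fin 3) :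
    Lw q l (q i) ∈ gasket q := by
  apply subset_closure
  refine Set.mem_iUnion.2 ⟨l, ⟨q i, ?_, rfl⟩⟩
  fin_cases i <;> simp

lemma energy_step (q : Fin 3 → E2) (u : E2 → ℝ) (k : ℕ) :
    energyM q u (k + 1) = (5/3 : ℝ) * ∑ i : Fin 3, energyM q (u ∘ Lmap q i) k := by
  rw [energyM_eq]
  rw [Fintype.sum_equiv (Fin.consEquiv (fun _ : Fin (k+1) => Fin 3)).symm
      (fun w => cellSum q u (List.ofFn w))
      (fun p => cellSum q (u ∘ Lmap q p.1) (List.ofFn p.2))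
      (fun w => by
        show cellSum q u (List.ofFn w) = _
        have h : List.ofFn w = w 0 :: List.ofFn (Fin.tail w) := List.ofFn_succ (f := w)
        rw [h, cellSum_cons]
        rfl)]
  rw [Fintype.sum_prod_type]
  simp only [energyM_eq]
  rw [Finset.mul_sum]
  rw [Finset.mul_sum]
  apply Finset.sum_congr rfl
  intro i _
  rw [← mul_assoc]
  congr 1
  ring


lemma energy_split' (q : Fin 3 → E2) (n : ℕ) :
    ∀ (u : E2 → ℝ) (m : ℕ), energyM q u (n + m) =
      (5/3 : ℝ) ^ n * ∑ ω : Fin n → Fin 3, energyM q (u ∘ Lw q (List.ofFn ω)) m := by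
  induction n with
  | zero =>
    intro u m
    have h : ∀ ω : Fin 0 → Fin 3, energyM q (u ∘ Lw q (List.ofFn ω)) m = energyM q u m := by
      intro ω
      congr 1
    simp only [Nat.zero_add, pow_zero, one_mul]
    rw [show (∑ ω : Fin 0 → Fin 3, energyM q (u ∘ Lw q (List.ofFn ω)) m) = energyM q u m from by
      rw [Fintype.sum_unique fun ω => energyM q (u ∘ Lw q (List.ofFn ω)) m, h]]
  | succ k ih =>
    intro u m
    have hstep : k + 1 + m = (k + m) + 1 := by omega
    rw [hstep, energy_step]
    simp only [fun i => ih (u ∘ Lmap q i) m]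
    rw [Fintype.sum_equiv (Fin.consEquiv (fun _ : Fin (k+1) => Fin 3)).symm
        (fun ω => energyM q (u ∘ Lw q (List.ofFn ω)) m)
        (fun p => energyM q ((u ∘ Lmap q p.1) ∘ Lw q (List.ofFn p.2)) m)
        (fun ω => by
          show energyM q (u ∘ Lw q (List.ofFn ω)) m = _
          have h : List.ofFn ω = ω 0 :: List.ofFn (Fin.tail ω) := List.ofFn_succ (f := ω)
          rw [h]
          rfl)]
    rw [Fintype.sum_prod_type]
    rw [Finset.mul_sum, Finset.mul_sum]
    apply Finset.sum_congr rfl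
    intro i _
    rw [← mul_assoc]
    congr 1
    ring

lemma energyM_zero (q : Fin 3 → E2) (v : E2 → ℝ) :
    energyM q v 0 = (v (q 0) - v (q 1))^2 + (v (q 0) - v (q 2))^2 + (v (q 1) - v (q 2))^2 := by
  unfold energyM
  rw [Fintype.sum_unique]
  rw [Finset.sum_insert (by decide), Finset.sum_insert (by decide), Finset.sum_singleton]
  simp [Lw]
  ring

lemma energy_mono_base (q : Fin 3 → E2) (v : E2 → ℝ) : energyM q v 0 ≤ energyM q v 1 := by
  have h1 : energyM q v 1 = (5/3 : ℝ) * ∑ i : Fin 3, energyM q (v ∘ Lmap q i) 0 := by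
    have := energy_step q v 0
    rwa [zero_add] at this
  rw [h1, Fin.sum_univ_three, energyM_zero, energyM_zero, energyM_zero, energyM_zero]
  simp only [Function.comp_apply, Lmap]
  rw [midpoint_self, midpoint_self, midpoint_self,
    midpoint_comm (q 1) (q 0), midpoint_comm (q 2) (q 0), midpoint_comm (q 2) (q 1)]
  set a := v (q 0)
  set b := v (q 1)
  set c := v (q 2)
  set x := v (midpoint ℝ (q 0) (q 1))
  set y := v (midpoint ℝ (q 0) (q 2))
  set z := v (midpoint ℝ (q 1) (q 2))
  nlinarith [sq_nonneg (4*a+3*b+3*c-5*x-5*y), sq_nonneg (7*b+3*c-5*x+15*y-20*z),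
    sq_nonneg (c+3*x-2*y-2*z)]

lemma energy_mono (q : Fin 3 → E2) (u : E2 → ℝ) : Monotone (energyM q u) := by
  apply monotone_nat_of_le_succ
  intro m
  have h0 := energy_split' q m u 0
  have h1 := energy_split' q m u 1
  rw [Nat.add_zero] at h0
  rw [show m + 1 = m + 1 from rfl] at h1
  rw [h0, h1]
  apply mul_le_mul_of_nonneg_left _ (by positivity)
  apply Finset.sum_le_sum
  intro ω _
  exact energy_mono_base q _

lemma energy_rec (q : Fin 3 → E2) (n : ℕ) (α : (Fin n → Fin 3) → ℝ) (f Tf fα : E2 → ℝ)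
    (A : ℝ) (hαA : ∀ ω, |α ω| ≤ A)
    (hself : ∀ ω : Fin n → Fin 3, ∀ x ∈ gasket q,
      fα (Lw q (List.ofFn ω) x) = f (Lw q (List.ofFn ω) x) + α ω * (fα x - Tf x))
    (K1 K2 K3 : ℝ) (hK2 : 0 ≤ K2) (hK3 : 0 ≤ K3)
    (hK : ∀ a b c : ℝ, (a + b - c)^2 ≤ K1*a^2 + K2*b^2 + K3*c^2) (m : ℕ) :
    energyM q fα (n + m) ≤ K1 * energyM q f (n + m)
      + K2 * 5^n * A^2 * energyM q fα m + K3 * 5^n * A^2 * energyM q Tf m := by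
  have hA0 : 0 ≤ A := le_trans (abs_nonneg _) (hαA (fun _ => 0))
  -- pointwise bound on one edge of one subcell
  have cell : ∀ (ω : Fin n → Fin 3) (l : List (Fin 3)) (i j : Fin 3),
      (fα (Lw q (List.ofFn ω) (Lw q l (q i))) - fα (Lw q (List.ofFn ω) (Lw q l (q j))))^2
      ≤ K1 * (f (Lw q (List.ofFn ω) (Lw q l (q i))) - f (Lw q (List.ofFn ω) (Lw q l (q j))))^2
        + K2 * (α ω)^2 * (fα (Lw q l (q i)) - fα (Lw q l (q j)))^2
        + K3 * (α ω)^2 * (Tf (Lw q l (q i)) - Tf (Lw q l (q j)))^2 := by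
    intro ω l i j
    rw [hself ω _ (vert_mem_gasket q l i), hself ω _ (vert_mem_gasket q l j)]
    have h := hK (f (Lw q (List.ofFn ω) (Lw q l (q i))) - f (Lw q (List.ofFn ω) (Lw q l (q j))))
      (α ω * (fα (Lw q l (q i)) - fα (Lw q l (q j))))
      (α ω * (Tf (Lw q l (q i)) - Tf (Lw q l (q j))))
    nlinarith [h]
  -- per-ω bound on level-m energies
  have cellb : ∀ ω : Fin n → Fin 3, energyM q (fα ∘ Lw q (List.ofFn ω)) m
      ≤ K1 * energyM q (f ∘ Lw q (List.ofFn ω)) m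
        + K2 * (α ω)^2 * energyM q fα m + K3 * (α ω)^2 * energyM q Tf m := by
    intro ω
    simp only [energyM_eq]
    have key : ∀ w' : Fin m → Fin 3,
        cellSum q (fα ∘ Lw q (List.ofFn ω)) (List.ofFn w')
        ≤ K1 * cellSum q (f ∘ Lw q (List.ofFn ω)) (List.ofFn w')
          + K2 * (α ω)^2 * cellSum q fα (List.ofFn w')
          + K3 * (α ω)^2 * cellSum q Tf (List.ofFn w') := by
      intro w'
      unfold cellSum
      rw [Finset.mul_sum, Finset.mul_sum, Finset.mul_sum, ← Finset.sum_add_distrib,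
        ← Finset.sum_add_distrib]
      apply Finset.sum_le_sum
      intro p _
      simpa using cell ω (List.ofFn w') p.1 p.2
    calc (5/3 : ℝ)^m * ∑ w' : Fin m → Fin 3, cellSum q (fα ∘ Lw q (List.ofFn ω)) (List.ofFn w')
        ≤ (5/3 : ℝ)^m * ∑ w' : Fin m → Fin 3,
            (K1 * cellSum q (f ∘ Lw q (List.ofFn ω)) (List.ofFn w')
              + K2 * (α ω)^2 * cellSum q fα (List.ofFn w')
              + K3 * (α ω)^2 * cellSum q Tf (List.ofFn w')) := by
          apply mul_le_mul_of_nonneg_left (Finset.sum_le_sum fun w' _ => key w') (by positivity)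
      _ = K1 * ((5/3 : ℝ)^m * ∑ w' : Fin m → Fin 3, cellSum q (f ∘ Lw q (List.ofFn ω)) (List.ofFn w'))
            + K2 * (α ω)^2 * ((5/3 : ℝ)^m * ∑ w' : Fin m → Fin 3, cellSum q fα (List.ofFn w'))
            + K3 * (α ω)^2 * ((5/3 : ℝ)^m * ∑ w' : Fin m → Fin 3, cellSum q Tf (List.ofFn w')) := by
          rw [Finset.sum_add_distrib, Finset.sum_add_distrib, ← Finset.mul_sum, ← Finset.mul_sum,
            ← Finset.mul_sum]
          ring
  -- sum over ω
  rw [energy_split' q n fα m, energy_split' q n f m]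
  have hω2 : ∀ ω : (Fin n → Fin 3), (α ω)^2 ≤ A^2 := by
    intro ω
    have := hαA ω
    nlinarith [abs_nonneg (α ω), sq_abs (α ω)]
  have cellb2 : ∀ ω : Fin n → Fin 3, energyM q (fα ∘ Lw q (List.ofFn ω)) m
      ≤ K1 * energyM q (f ∘ Lw q (List.ofFn ω)) m
        + K2 * A^2 * energyM q fα m + K3 * A^2 * energyM q Tf m := by
    intro ω
    have h1 := cellb ω
    have h2 := mul_le_mul_of_nonneg_right (mul_le_mul_of_nonneg_left (hω2 ω) hK2)
      (energyM_nonneg q fα m)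
    have h3 := mul_le_mul_of_nonneg_right (mul_le_mul_of_nonneg_left (hω2 ω) hK3)
      (energyM_nonneg q Tf m)
    linarith
  have hsum : ∑ ω : Fin n → Fin 3, energyM q (fα ∘ Lw q (List.ofFn ω)) m
      ≤ ∑ ω : Fin n → Fin 3, (K1 * energyM q (f ∘ Lw q (List.ofFn ω)) m
        + K2 * A^2 * energyM q fα m + K3 * A^2 * energyM q Tf m) :=
    Finset.sum_le_sum fun ω _ => cellb2 ω
  have hcard : (Finset.univ : Finset (Fin n → Fin 3)).card = 3^n := by
    simp [Finset.card_univ]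
  have h53 : (5/3 : ℝ)^n * (3:ℝ)^n = 5^n := by
    rw [div_pow, div_mul_eq_mul_div, mul_div_assoc, div_self (by positivity), mul_one]
  calc (5/3 : ℝ)^n * ∑ ω : Fin n → Fin 3, energyM q (fα ∘ Lw q (List.ofFn ω)) m
      ≤ (5/3 : ℝ)^n * ∑ ω : Fin n → Fin 3, (K1 * energyM q (f ∘ Lw q (List.ofFn ω)) m
        + K2 * A^2 * energyM q fα m + K3 * A^2 * energyM q Tf m) :=
        mul_le_mul_of_nonneg_left hsum (by positivity)
    _ = K1 * ((5/3 : ℝ)^n * ∑ ω : Fin n → Fin 3, energyM q (f ∘ Lw q (List.ofFn ω)) m)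
        + K2 * 5^n * A^2 * energyM q fα m + K3 * 5^n * A^2 * energyM q Tf m := by
        rw [Finset.sum_add_distrib, Finset.sum_add_distrib, ← Finset.mul_sum,
          Finset.sum_const, Finset.sum_const, hcard, nsmul_eq_mul, nsmul_eq_mul]
        push_cast
        linear_combination (K2 * A^2 * energyM q fα m + K3 * A^2 * energyM q Tf m) * h53


theorem alpha_fractal_finite_energy (q : Fin 3 → E2) (hq : Equidistant q)
    (n : ℕ) (α : (Fin n → Fin 3) → ℝ) (f Tf fα : E2 → ℝ)
    (Tnorm : ℝ) (hTnorm : 0 ≤ Tnorm)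
    (A : ℝ)
    (hA : A = Finset.univ.sup' Finset.univ_nonempty (fun ω : Fin n → Fin 3 => |α ω|))
    (hAle : A ≤ 1 / Real.sqrt (3 * 5 ^ n))
    (hT : Tf (q 0) = f (q 0) ∧ Tf (q 1) = f (q 1) ∧ Tf (q 2) = f (q 2))
    (hself : ∀ ω : Fin n → Fin 3, ∀ x ∈ gasket q,
      fα (Lw q (List.ofFn ω) x) = f (Lw q (List.ofFn ω) x) + α ω * (fα x - Tf x))
    (hfαcont : Continuous fα)
    (Ef ETf : ℝ)
    (hEf : Tendsto (energyM q f) atTop (𝓝 Ef))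
    (hETf : Tendsto (energyM q Tf) atTop (𝓝 ETf))
    (hTbound : ETf ≤ Tnorm * Ef) :
    ∃ Efα : ℝ, Tendsto (energyM q fα) atTop (𝓝 Efα) ∧
      Efα * (1 - 3 * 5 ^ n * A ^ 2) ≤ Ef * (3 + 3 * 5 ^ n * A ^ 2 * Tnorm) := by
  have hαA : ∀ ω, |α ω| ≤ A := fun ω => by
    rw [hA]; exact Finset.le_sup' (fun ω : Fin n → Fin 3 => |α ω|) (Finset.mem_univ ω)
  have hA0 : 0 ≤ A := le_trans (abs_nonneg _) (hαA (fun _ => 0))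
  have h5A : (5:ℝ)^n * A^2 ≤ 1/3 := by
    have h3 : (0:ℝ) < 3 * 5^n := by positivity
    have h2 : A^2 ≤ 1 / (3 * 5^n) := by
      have h := pow_le_pow_left₀ hA0 hAle 2
      rwa [div_pow, one_pow, Real.sq_sqrt h3.le] at h
    calc (5:ℝ)^n * A^2 ≤ (5:ℝ)^n * (1/(3*5^n)) := by
          exact mul_le_mul_of_nonneg_left h2 (by positivity)
      _ = 1/3 := by field_simp
  have hmono := energy_mono q fα
  have hrec1 : ∀ m, energyM q fα (n+m) ≤ 3 * energyM q f (n+m)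
      + 3*5^n*A^2 * energyM q fα m + 3*5^n*A^2 * energyM q Tf m := by
    intro m
    have h := energy_rec q n α f Tf fα A hαA hself 3 3 3 (by norm_num) (by norm_num)
      (fun x y z => by nlinarith [sq_nonneg (x-y), sq_nonneg (x+z), sq_nonneg (y+z)]) m
    linarith
  have hrec2 : ∀ m, energyM q fα (n+m) ≤ 12 * energyM q f (n+m) + 4 * energyM q Tf m := by
    intro m
    have h := energy_rec q n α f Tf fα A hαA hself 4 2 4 (by norm_num) (by norm_num)
      (fun x y z => by nlinarith [sq_nonneg (3*x - y + z), sq_nonneg (y + 2*z)]) m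
    have he := energyM_nonneg q fα m
    have hb := energyM_nonneg q Tf m
    have h2 := mul_le_mul_of_nonneg_right h5A he
    have h3 := mul_le_mul_of_nonneg_right h5A hb
    have h4 : energyM q fα m ≤ energyM q fα (n+m) := hmono (Nat.le_add_left m n)
    nlinarith
  obtain ⟨Ca, hCa⟩ := hEf.bddAbove_range
  obtain ⟨Cb, hCb⟩ := hETf.bddAbove_range
  have hbdd : BddAbove (Set.range (energyM q fα)) := by
    refine ⟨12*Ca + 4*Cb, ?_⟩
    rintro x ⟨k, rfl⟩
    have h1 : energyM q fα k ≤ energyM q fα (n+k) := hmono (Nat.le_add_left k n)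
    have h2 := hrec2 k
    have h3 : energyM q f (n+k) ≤ Ca := hCa ⟨n+k, rfl⟩
    have h4 : energyM q Tf k ≤ Cb := hCb ⟨k, rfl⟩
    linarith
  have hconv : Tendsto (energyM q fα) atTop (𝓝 (⨆ m, energyM q fα m)) :=
    tendsto_atTop_ciSup hmono hbdd
  refine ⟨⨆ m, energyM q fα m, hconv, ?_⟩
  set Efα := ⨆ m, energyM q fα m with hEfα
  have hshift : Tendsto (fun m => energyM q fα (n+m)) atTop (𝓝 Efα) := by
    have h1 : (fun m => energyM q fα (m + n)) = (fun m => energyM q fα (n + m)) :=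
      funext fun m => by rw [Nat.add_comm]
    rw [← h1]
    exact hconv.comp (tendsto_add_atTop_nat n)
  have hashift : Tendsto (fun m => energyM q f (n+m)) atTop (𝓝 Ef) := by
    have h1 : (fun m => energyM q f (m + n)) = (fun m => energyM q f (n + m)) :=
      funext fun m => by rw [Nat.add_comm]
    rw [← h1]
    exact hEf.comp (tendsto_add_atTop_nat n)
  have hlim : Efα ≤ 3*Ef + 3*5^n*A^2*Efα + 3*5^n*A^2*ETf := by
    refine le_of_tendsto_of_tendsto' hshift ?_ hrec1
    exact ((hashift.const_mul 3).add (hconv.const_mul _)).add (hETf.const_mul _)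
  have hc : (0:ℝ) ≤ 3*5^n*A^2 := by positivity
  have hTb := mul_le_mul_of_nonneg_left hTbound hc
  nlinarith [hlim, hTb]
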